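/- Let E ⊆ ℍ be symmetric, and assume 0, a, b ∈ π(E). Then 2ma + 2nb ∈ π(E) for all integers m, n, and for every z ∈ 2ℤa + 2ℤb there exists t_z ∈ ℝ such that (z, t_z + 4k·det(a,b)) ∈ E for all k ∈ ℤ, where det((a₁,a₂),(b₁,b₂)) := a₁b₂ − a₂b₁. -/

import Mathlib

noncomputable section

/-- The first Heisenberg group `ℍ`, as `ℝ³` with coordinates `(x, y, t)`. -/
structure Heis where
  x : ℝ
  y : ℝ
  t : ℝ

namespace Heis

/-- The Heisenberg group law `(x,y,t)·(x',y',t') = (x+x', y+y', t+t'+(xy'−yx')/2)`. -/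
def mul (p q : Heis) : Heis :=
  ⟨p.x + q.x, p.y + q.y, p.t + q.t + (p.x * q.y - p.y * q.x) / 2⟩

/-- The group inverse. -/
def inv (p : Heis) : Heis := ⟨-p.x, -p.y, -p.t⟩

/-- The map `p̄ = (−x,−y,t)`. -/
def bar (p : Heis) : Heis := ⟨-p.x, -p.y, p.t⟩

/-- The Korányi norm `‖(x,y,t)‖ = ((x²+y²)² + 16t²)^{1/4}`. -/
def knorm (p : Heis) : ℝ := ((p.x ^ 2 + p.y ^ 2) ^ 2 + 16 * p.t ^ 2) ^ ((1 : ℝ) / 4)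

/-- The Korányi distance `d(p,q) = ‖q⁻¹·p‖`. -/
def kdist (p q : Heis) : ℝ := knorm (mul (inv q) p)

/-- The projection `π : ℍ → ℝ²`, `π(x,y,t) = (x,y)`. -/
def pi (p : Heis) : ℝ × ℝ := (p.x, p.y)

/-- The embedding of `ℝ²` into `ℍ`, `z ↦ (z, 0)`. -/
def emb (z : ℝ × ℝ) : Heis := ⟨z.1, z.2, 0⟩

end Heis

/-- The Euclidean point reflection `S_x(y) = 2x − y` in `ℝ²`. -/
def S (a b : ℝ × ℝ) : ℝ × ℝ := 2 • a - b

/-- The symmetric point of `q` relative to `p`: `Σ_p(q) := q · (S_{π(p)}(π(q)) − π(q), 0)`. -/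
def symPt (p q : Heis) : Heis :=
  Heis.mul q (Heis.emb (S (Heis.pi p) (Heis.pi q) - Heis.pi q))

/-- A set `E ⊆ ℍ` is symmetric if `Σ_p(q) ∈ E` for all `p, q ∈ E`. -/
def SymSetH (E : Set Heis) : Prop := ∀ p ∈ E, ∀ q ∈ E, symPt p q ∈ E

/-- A set `A ⊆ ℝ²` is symmetric if `S_x(y) = 2x − y ∈ A` for all `x, y ∈ A`. -/
def SymSetR2 (A : Set (ℝ × ℝ)) : Prop := ∀ x ∈ A, ∀ y ∈ A, S x y ∈ A

/-- The `p`-lift of a planar point `w` (identified with `(w,0) ∈ ℍ`):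
`(w,0)|_p = p · (w − π(p), 0)`. -/
def liftPt (p : Heis) (w : ℝ × ℝ) : Heis := Heis.mul p (Heis.emb (w - Heis.pi p))

/-- The `p`-lift of a planar sequence `(z₀, z₁, …)`: the sequence `(p₀, p₁, …)` with
`p₀ = (z₀,0)|_p` and `p_{j+1} = (z_{j+1},0)|_{p_j}`. -/
def liftSeq (p : Heis) (z : ℕ → ℝ × ℝ) : ℕ → Heis
  | 0 => liftPt p (z 0)
  | j + 1 => liftPt (liftSeq p z j) (z (j + 1))

/-- `(z₀, …, z_{n-1})` is a checkers sequence in `A ⊆ ℝ²`: each `z_j ∈ A` and each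
`z_{j+1} = S_{y_j}(z_j)` for some `y_j ∈ A`. -/
def IsCheckers (A : Set (ℝ × ℝ)) (z : ℕ → ℝ × ℝ) (n : ℕ) : Prop :=
  (∀ j < n, z j ∈ A) ∧ ∀ j : ℕ, j + 1 < n → ∃ y ∈ A, z (j + 1) = S y (z j)

/- ### Auxiliary lemmas -/

lemma heis_eq {x y t x' y' t' : ℝ} (h1 : x = x') (h2 : y = y') (h3 : t = t') :
    (⟨x, y, t⟩ : Heis) = ⟨x', y', t'⟩ := by rw [h1, h2, h3]

/-- Coordinates of the symmetric point. -/
lemma symPt_coords (p q : Heis) :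
    symPt p q = ⟨2 * p.x - q.x, 2 * p.y - q.y, q.t + (q.x * p.y - q.y * p.x)⟩ := by
  simp only [symPt, Heis.mul, Heis.emb, Heis.pi, S, Prod.smul_mk, Prod.mk_sub_mk, smul_eq_mul]
  exact heis_eq (by ring) (by ring) (by ring)

/-- The four-reflection cycle with centers over `0, a, 2b, 2b−a` returns over the same planar
point and raises the `t`-coordinate by `4·det(a,b)`. -/
lemma shift_cycle_up (p0 pa pc pd q : Heis) (a b : ℝ × ℝ)
    (h0x : p0.x = 0) (h0y : p0.y = 0)
    (hax : pa.x = a.1) (hay : pa.y = a.2)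
    (hcx : pc.x = 2 * b.1) (hcy : pc.y = 2 * b.2)
    (hdx : pd.x = 2 * b.1 - a.1) (hdy : pd.y = 2 * b.2 - a.2) :
    symPt pd (symPt pc (symPt pa (symPt p0 q)))
      = ⟨q.x, q.y, q.t + 4 * (a.1 * b.2 - a.2 * b.1)⟩ := by
  simp only [symPt_coords, h0x, h0y, hax, hay, hcx, hcy, hdx, hdy]
  exact heis_eq (by ring) (by ring) (by ring)

/-- The four-reflection cycle with centers over `0, 2b, a, a−2b` returns over the same planar
point and lowers the `t`-coordinate by `4·det(a,b)`. -/
lemma shift_cycle_down (p0 pc pa pd q : Heis) (a b : ℝ × ℝ)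
    (h0x : p0.x = 0) (h0y : p0.y = 0)
    (hcx : pc.x = 2 * b.1) (hcy : pc.y = 2 * b.2)
    (hax : pa.x = a.1) (hay : pa.y = a.2)
    (hdx : pd.x = a.1 - 2 * b.1) (hdy : pd.y = a.2 - 2 * b.2) :
    symPt pd (symPt pa (symPt pc (symPt p0 q)))
      = ⟨q.x, q.y, q.t - 4 * (a.1 * b.2 - a.2 * b.1)⟩ := by
  simp only [symPt_coords, h0x, h0y, hax, hay, hcx, hcy, hdx, hdy]
  exact heis_eq (by ring) (by ring) (by ring)

/-- A symmetric planar set containing `0` and `c` is closed under translation by `2ℤc`. -/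
lemma lat_step (A : Set (ℝ × ℝ)) (hA : SymSetR2 A) (h0 : (0 : ℝ × ℝ) ∈ A)
    {c : ℝ × ℝ} (hc : c ∈ A) {w : ℝ × ℝ} (hw : w ∈ A) : ∀ n : ℤ, w + (2 * n) • c ∈ A := by
  intro n
  induction n using Int.induction_on with
  | zero => simpa using hw
  | succ n ih =>
      have h1 : -(w + (2 * (n : ℤ)) • c) ∈ A := by
        simpa [S] using hA 0 h0 _ ih
      have h2 := hA c hc _ h1
      have h3 : S c (-(w + (2 * (n : ℤ)) • c)) = w + (2 * ((n : ℤ) + 1)) • c := by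
        simp only [S]; module
      rwa [h3] at h2
  | pred n ih =>
      have h1 := hA c hc _ ih
      have h2 := hA 0 h0 _ h1
      have h3 : S 0 (S c (w + (2 * (-(n : ℤ))) • c)) = w + (2 * (-(n : ℤ) - 1)) • c := by
        simp only [S]; module
      rwa [h3] at h2

/-- Let `E ⊆ ℍ` be symmetric with `0, a, b ∈ π(E)`. Then
`2ma + 2nb ∈ π(E)` for all `m, n ∈ ℤ`, and for every `z ∈ 2ℤa + 2ℤb` there exists
`t_z ∈ ℝ` with `(z, t_z + 4k·det(a,b)) ∈ E` for all `k ∈ ℤ`. -/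
theorem discrete_structure (E : Set Heis) (hE : SymSetH E) (a b : ℝ × ℝ)
    (h0 : (0 : ℝ × ℝ) ∈ Heis.pi '' E) (ha : a ∈ Heis.pi '' E) (hb : b ∈ Heis.pi '' E) :
    (∀ m n : ℤ, (2 * m) • a + (2 * n) • b ∈ Heis.pi '' E) ∧
    (∀ z : ℝ × ℝ, (∃ m n : ℤ, z = (2 * m) • a + (2 * n) • b) →
      ∃ tz : ℝ, ∀ k : ℤ,
        (⟨z.1, z.2, tz + 4 * (k : ℝ) * (a.1 * b.2 - a.2 * b.1)⟩ : Heis) ∈ E) := by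
  obtain ⟨P0, hP0, hπ0⟩ := h0
  obtain ⟨PA, hPA, hπa⟩ := ha
  obtain ⟨PB, hPB, hπb⟩ := hb
  have h0x : P0.x = 0 := congrArg Prod.fst hπ0
  have h0y : P0.y = 0 := congrArg Prod.snd hπ0
  have hax : PA.x = a.1 := congrArg Prod.fst hπa
  have hay : PA.y = a.2 := congrArg Prod.snd hπa
  have hbx : PB.x = b.1 := congrArg Prod.fst hπb
  have hby : PB.y = b.2 := congrArg Prod.snd hπb
  -- the planar projection of E is symmetric
  have hAsym : SymSetR2 (Heis.pi '' E) := by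
    rintro x ⟨p, hp, rfl⟩ y ⟨q, hq, rfl⟩
    refine ⟨symPt p q, hE p hp q hq, ?_⟩
    simp only [symPt_coords, Heis.pi, S, Prod.smul_mk, Prod.mk_sub_mk, smul_eq_mul]
    norm_num [two_smul]
    exact ⟨by ring, by ring⟩
  have h0A : (0 : ℝ × ℝ) ∈ Heis.pi '' E := ⟨P0, hP0, hπ0⟩
  have haA : a ∈ Heis.pi '' E := ⟨PA, hPA, hπa⟩
  have hbA : b ∈ Heis.pi '' E := ⟨PB, hPB, hπb⟩
  have part1 : ∀ m n : ℤ, (2 * m) • a + (2 * n) • b ∈ Heis.pi '' E := by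
    intro m n
    have h1 := lat_step _ hAsym h0A haA h0A m
    rw [zero_add] at h1
    exact lat_step _ hAsym h0A hbA h1 n
  refine ⟨part1, ?_⟩
  -- points of E over 2b, 2b−a and a−2b
  set Qc : Heis := symPt PB P0 with hQc
  have hQcE : Qc ∈ E := hE PB hPB P0 hP0
  have hQcx : Qc.x = 2 * b.1 := by rw [hQc, symPt_coords]; simp [hbx, h0x]
  have hQcy : Qc.y = 2 * b.2 := by rw [hQc, symPt_coords]; simp [hby, h0y]
  set Qu : Heis := symPt PB PA with hQu
  have hQuE : Qu ∈ E := hE PB hPB PA hPA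
  have hQux : Qu.x = 2 * b.1 - a.1 := by rw [hQu, symPt_coords]; simp [hbx, hax]
  have hQuy : Qu.y = 2 * b.2 - a.2 := by rw [hQu, symPt_coords]; simp [hby, hay]
  set Qd : Heis := symPt P0 Qu with hQd
  have hQdE : Qd ∈ E := hE P0 hP0 Qu hQuE
  have hQdx : Qd.x = a.1 - 2 * b.1 := by
    rw [hQd, symPt_coords]; simp only [h0x, hQux]; ring
  have hQdy : Qd.y = a.2 - 2 * b.2 := by
    rw [hQd, symPt_coords]; simp only [h0y, hQuy]; ring
  rintro z ⟨m, n, rfl⟩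
  obtain ⟨P, hP, hπP⟩ := part1 m n
  set z : ℝ × ℝ := (2 * m) • a + (2 * n) • b with hzdef
  have hPx : P.x = z.1 := congrArg Prod.fst hπP
  have hPy : P.y = z.2 := congrArg Prod.snd hπP
  refine ⟨P.t, ?_⟩
  intro k
  induction k using Int.induction_on with
  | zero =>
      have e : (⟨z.1, z.2, P.t + 4 * ((0 : ℤ) : ℝ) * (a.1 * b.2 - a.2 * b.1)⟩ : Heis) = P :=
        heis_eq hPx.symm hPy.symm (by push_cast; ring)
      rw [e]; exact hP
  | succ k ih =>
      have h := hE Qu hQuE _ (hE Qc hQcE _ (hE PA hPA _ (hE P0 hP0 _ ih)))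
      rw [shift_cycle_up P0 PA Qc Qu _ a b h0x h0y hax hay hQcx hQcy hQux hQuy] at h
      have e : (⟨z.1, z.2,
            (P.t + 4 * ((k : ℤ) : ℝ) * (a.1 * b.2 - a.2 * b.1)) + 4 * (a.1 * b.2 - a.2 * b.1)⟩
            : Heis)
          = ⟨z.1, z.2, P.t + 4 * (((k : ℤ) + 1 : ℤ) : ℝ) * (a.1 * b.2 - a.2 * b.1)⟩ :=
        heis_eq rfl rfl (by push_cast; ring)
      rw [← e]; exact h
  | pred k ih =>
      have h := hE Qd hQdE _ (hE PA hPA _ (hE Qc hQcE _ (hE P0 hP0 _ ih)))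
      rw [shift_cycle_down P0 Qc PA Qd _ a b h0x h0y hQcx hQcy hax hay hQdx hQdy] at h
      have e : (⟨z.1, z.2,
            (P.t + 4 * ((-k : ℤ) : ℝ) * (a.1 * b.2 - a.2 * b.1)) - 4 * (a.1 * b.2 - a.2 * b.1)⟩
            : Heis)
          = ⟨z.1, z.2, P.t + 4 * (((-k - 1) : ℤ) : ℝ) * (a.1 * b.2 - a.2 * b.1)⟩ :=
        heis_eq rfl rfl (by push_cast; ring)
      rw [← e]; exact h
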